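/- Let n ≥ 2, g₀ := 2 − 3/(2n), g₁ := 2 + 3/(2n), δ := (g₁ − g₀)/3 = 1/n, s_k := 2^{2^k} for k ∈ ℕ₀, and let g be defined by g(s) := s^{g₀−1+δ} for 0 < s < 2, g(s) := s_{2k+1}^{−δ}·s^{g₁−1} for s_{2k} ≤ s < s_{2k+1}, and g(s) := s_{2k+2}^{δ}·s^{g₀−1} for s_{2k+1} ≤ s < s_{2k+2} (k ∈ ℕ₀). Then liminf_{s→∞} g(s)/s = 0 and limsup_{s→∞} g(s)/s = ∞. -/

import Mathlib

/-- `s_k = 2^{2^k}`. -/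
noncomputable def skSeq (k : ℕ) : ℝ := (2 : ℝ) ^ (2 ^ k : ℕ)

/-- The concrete oscillating example with `δ = (g₁ − g₀)/3`. -/
noncomputable def gEx (g₀ g₁ : ℝ) (s : ℝ) : ℝ :=
  if s < 2 then s ^ (g₀ - 1 + (g₁ - g₀) / 3)
  else if Nat.floor (Real.logb 2 (Real.logb 2 s)) % 2 = 0 then
    skSeq (Nat.floor (Real.logb 2 (Real.logb 2 s)) + 1) ^ (-((g₁ - g₀) / 3)) * s ^ (g₁ - 1)
  else
    skSeq (Nat.floor (Real.logb 2 (Real.logb 2 s)) + 1) ^ ((g₁ - g₀) / 3) * s ^ (g₀ - 1)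

open Filter Real Topology


lemma skSeq_pos (m : ℕ) : 0 < skSeq m := by unfold skSeq; positivity

lemma skSeq_ge_two (m : ℕ) : 2 ≤ skSeq m := by
  unfold skSeq
  calc (2:ℝ) = 2 ^ (1:ℕ) := (pow_one 2).symm
  _ ≤ 2 ^ (2^m : ℕ) := by
    exact pow_le_pow_right₀ one_le_two Nat.one_le_two_pow

lemma logb_skSeq (m : ℕ) : Real.logb 2 (skSeq m) = (2:ℝ)^(m:ℕ) := by
  unfold skSeq
  rw [Real.logb_pow]
  simp [Real.logb_self_eq_one]

lemma floor_loglog (m : ℕ) : Nat.floor (Real.logb 2 (Real.logb 2 (skSeq m))) = m := by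
  rw [logb_skSeq]
  rw [show ((2:ℝ)^(m:ℕ)) = (2:ℝ)^((m:ℝ)) by rw [Real.rpow_natCast]]
  rw [Real.logb_rpow (b := 2) (by norm_num) (by norm_num)]
  exact Nat.floor_natCast m

lemma skSeq_succ (m : ℕ) : skSeq (m+1) = skSeq m ^ (2:ℕ) := by
  unfold skSeq
  rw [← pow_mul, pow_succ]

lemma skSeq_rpow_succ (m : ℕ) (x : ℝ) : skSeq (m+1) ^ x = skSeq m ^ (2*x) := by
  rw [skSeq_succ, ← Real.rpow_natCast (skSeq m) 2, ← Real.rpow_mul (skSeq_pos m).le]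
  norm_num

lemma gEx_skSeq (n : ℕ) (hn : 2 ≤ n) (m : ℕ) :
    gEx (2 - 3 / (2 * (n : ℝ))) (2 + 3 / (2 * (n : ℝ))) (skSeq m) / skSeq m =
      if m % 2 = 0 then skSeq m ^ (-(1 / (2 * (n : ℝ)))) else skSeq m ^ (1 / (2 * (n : ℝ))) := by
  have hpos := skSeq_pos m
  have hn0 : (n:ℝ) ≠ 0 := by positivity
  have hnotlt : ¬ skSeq m < 2 := not_lt.mpr (skSeq_ge_two m)
  unfold gEx
  rw [if_neg hnotlt, floor_loglog]
  by_cases h : m % 2 = 0 <;>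
    [rw [if_pos h, if_pos h]; rw [if_neg h, if_neg h]] <;>
  · rw [skSeq_rpow_succ, ← Real.rpow_add hpos, ← Real.rpow_sub_one hpos.ne']
    congr 1
    field_simp
    ring

lemma tendsto_skSeq : Tendsto skSeq atTop atTop := by
  apply tendsto_atTop_mono (f := fun m : ℕ => (2:ℝ) ^ m)
  · intro m
    exact pow_le_pow_right₀ one_le_two (Nat.le_of_lt (Nat.lt_two_pow_self (n := m)))
  · exact tendsto_pow_atTop_atTop_of_one_lt one_lt_two

lemma gEx_nonneg (g₀ g₁ s : ℝ) (hs : 0 ≤ s) : 0 ≤ gEx g₀ g₁ s := by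
  unfold gEx
  split_ifs
  · exact Real.rpow_nonneg hs _
  · exact mul_nonneg (Real.rpow_nonneg (skSeq_pos _).le _) (Real.rpow_nonneg hs _)
  · exact mul_nonneg (Real.rpow_nonneg (skSeq_pos _).le _) (Real.rpow_nonneg hs _)

lemma coe_tendsto_top {α : Type*} {f : Filter α} {m : α → ℝ} (h : Tendsto m f atTop) :
    Tendsto (fun a => (m a : EReal)) f (𝓝 ⊤) := by
  rw [EReal.tendsto_nhds_top_iff_real]
  intro x
  filter_upwards [h.eventually (eventually_gt_atTop x)] with a ha
  exact_mod_cast ha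


/-- With `g₀ = 2 − 3/(2n)` and `g₁ = 2 + 3/(2n)` the concrete example satisfies
`liminf_{s→∞} g(s)/s = 0` and `limsup_{s→∞} g(s)/s = ∞`. -/
theorem stmt_18 (n : ℕ) (hn : 2 ≤ n) :
    Filter.liminf
      (fun s : ℝ => ((gEx (2 - 3 / (2 * (n : ℝ))) (2 + 3 / (2 * (n : ℝ))) s / s : ℝ) : EReal))
      Filter.atTop = 0 ∧
    Filter.limsup
      (fun s : ℝ => ((gEx (2 - 3 / (2 * (n : ℝ))) (2 + 3 / (2 * (n : ℝ))) s / s : ℝ) : EReal))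
      Filter.atTop = ⊤ := by
  have hn0 : (0:ℝ) < n := by positivity
  have hc : (0:ℝ) < 1 / (2 * (n:ℝ)) := by positivity
  set u : ℝ → EReal :=
    fun s : ℝ => ((gEx (2 - 3 / (2 * (n : ℝ))) (2 + 3 / (2 * (n : ℝ))) s / s : ℝ) : EReal) with hu
  -- subsequences
  have hodd : Tendsto (fun k : ℕ => skSeq (2*k+1)) atTop atTop :=
    tendsto_skSeq.comp (StrictMono.tendsto_atTop (fun a b h => by simp only; omega : StrictMono (fun k : ℕ => 2*k+1)))
  have heven : Tendsto (fun k : ℕ => skSeq (2*k)) atTop atTop :=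
    tendsto_skSeq.comp (StrictMono.tendsto_atTop (fun a b h => by simp only; omega : StrictMono (fun k : ℕ => 2*k)))
  have huodd : (fun k : ℕ => u (skSeq (2*k+1)))
      = fun k : ℕ => ((skSeq (2*k+1) ^ (1 / (2 * (n:ℝ))) : ℝ) : EReal) := by
    funext k
    rw [hu]
    simp only
    rw [gEx_skSeq n hn, if_neg (by omega)]
  have hueven : (fun k : ℕ => u (skSeq (2*k)))
      = fun k : ℕ => ((skSeq (2*k) ^ (-(1 / (2 * (n:ℝ)))) : ℝ) : EReal) := by
    funext k
    rw [hu]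
    simp only
    rw [gEx_skSeq n hn, if_pos (by omega)]
  constructor
  · -- liminf = 0
    apply le_antisymm
    · have hmap : Filter.map (fun k : ℕ => skSeq (2*k)) atTop ≤ atTop := heven
      calc Filter.liminf u atTop ≤ Filter.liminf u (Filter.map (fun k : ℕ => skSeq (2*k)) atTop) :=
            Filter.liminf_le_liminf_of_le hmap
        _ = Filter.liminf (fun k : ℕ => u (skSeq (2*k))) atTop := rfl
        _ = 0 := by
            rw [hueven]
            apply Filter.Tendsto.liminf_eq
            have : Tendsto (fun k : ℕ => skSeq (2*k) ^ (-(1 / (2 * (n:ℝ))))) atTop (𝓝 0) :=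
              (tendsto_rpow_neg_atTop hc).comp heven
            exact (EReal.tendsto_coe.mpr this).congr (by simp)
    · apply Filter.le_liminf_of_le (by isBoundedDefault)
      filter_upwards [eventually_ge_atTop (0:ℝ)] with s hs
      rw [hu]
      exact EReal.coe_nonneg.mpr (div_nonneg (gEx_nonneg _ _ _ hs) hs)
  · -- limsup = ⊤
    apply top_le_iff.mp
    have hmap : Filter.map (fun k : ℕ => skSeq (2*k+1)) atTop ≤ atTop := hodd
    calc (⊤ : EReal)
        = Filter.limsup (fun k : ℕ => u (skSeq (2*k+1))) atTop := by
          rw [huodd]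
          exact (Filter.Tendsto.limsup_eq (coe_tendsto_top
            ((tendsto_rpow_atTop hc).comp hodd))).symm
      _ = Filter.limsup u (Filter.map (fun k : ℕ => skSeq (2*k+1)) atTop) := rfl
      _ ≤ Filter.limsup u atTop := Filter.limsup_le_limsup_of_le hmap
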